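/- arXiv:2203.13133 — 2 statements merged into one kernel-verified Lean document; each statement's English description precedes it below -/
import Mathlib

section
/- Let λ > 0, A invertible, and define u(b̂,d̂) = (λ A* A + P* P)⁻¹ (λ A*(b + b̂) + P*(d + d̂)). If the sequences b̂^k, d̂^k defined by b̂^{k+1} = b̂^k + b − A u^k, d̂^{k+1} = d̂^k + d − P u^k (with u^k = u(b̂^k, d̂^k)) converge to limits b̂^∞, d̂^∞, then the limit wavefield u^∞ = u(b̂^∞, d̂^∞) satisfies A u^∞ = b and P u^∞ = d exactly. -/
open Matrix Filter Topology

/-- IR-WRI with fixed model: if the scaled dual sequences converge, the limit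
wavefield satisfies both the wave equation and the data equation exactly. -/
theorem fixed_model_dual_convergence {n r : ℕ} (l : ℝ) (hl : 0 < l)
    (A : Matrix (Fin n) (Fin n) ℂ) (hA : IsUnit A.det)
    (P : Matrix (Fin r) (Fin n) ℂ) (b : Fin n → ℂ) (d : Fin r → ℂ)
    (bhat : ℕ → Fin n → ℂ) (dhat : ℕ → Fin r → ℂ)
    (binf : Fin n → ℂ) (dinf : Fin r → ℂ)
    (uIter : (Fin n → ℂ) → (Fin r → ℂ) → Fin n → ℂ)
    (huIter : ∀ bh dh, uIter bh dh =
      ((l : ℂ) • (Aᴴ * A) + Pᴴ * P)⁻¹ *ᵥ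
        ((l : ℂ) • (Aᴴ *ᵥ (b + bh)) + Pᴴ *ᵥ (d + dh)))
    (hb : ∀ k, bhat (k + 1) = bhat k + b - A *ᵥ uIter (bhat k) (dhat k))
    (hd : ∀ k, dhat (k + 1) = dhat k + d - P *ᵥ uIter (bhat k) (dhat k))
    (hbl : Tendsto bhat atTop (𝓝 binf))
    (hdl : Tendsto dhat atTop (𝓝 dinf)) :
    A *ᵥ uIter binf dinf = b ∧ P *ᵥ uIter binf dinf = d := by
  have hcont : Continuous (fun p : (Fin n → ℂ) × (Fin r → ℂ) =>
      ((l : ℂ) • (Aᴴ * A) + Pᴴ * P)⁻¹ *ᵥ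
        ((l : ℂ) • (Aᴴ *ᵥ (b + p.1)) + Pᴴ *ᵥ (d + p.2))) := by
    apply Continuous.matrix_mulVec continuous_const
    apply Continuous.add
    · exact ((Continuous.matrix_mulVec continuous_const
        (continuous_const.add (continuous_fst : Continuous (Prod.fst : (Fin n → ℂ) × (Fin r → ℂ) → Fin n → ℂ)))).const_smul (l : ℂ))
    · exact Continuous.matrix_mulVec continuous_const
        (continuous_const.add continuous_snd)
  have hu : Tendsto (fun k => uIter (bhat k) (dhat k)) atTop
      (𝓝 (uIter binf dinf)) := by
    have := (hcont.continuousAt (x := (binf, dinf))).tendsto.comp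
      (hbl.prodMk_nhds hdl)
    simpa [huIter, Function.comp_def] using this
  have hAu : Tendsto (fun k => A *ᵥ uIter (bhat k) (dhat k)) atTop
      (𝓝 (A *ᵥ uIter binf dinf)) :=
    ((Continuous.matrix_mulVec continuous_const continuous_id).continuousAt
      (x := uIter binf dinf)).tendsto.comp hu
  have hPu : Tendsto (fun k => P *ᵥ uIter (bhat k) (dhat k)) atTop
      (𝓝 (P *ᵥ uIter binf dinf)) :=
    ((Continuous.matrix_mulVec continuous_const continuous_id).continuousAt
      (x := uIter binf dinf)).tendsto.comp hu
  have hb1 : Tendsto (fun k => bhat (k + 1)) atTop (𝓝 binf) :=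
    hbl.comp (tendsto_add_atTop_nat 1)
  have hd1 : Tendsto (fun k => dhat (k + 1)) atTop (𝓝 dinf) :=
    hdl.comp (tendsto_add_atTop_nat 1)
  have hb2 : Tendsto (fun k => bhat (k + 1)) atTop
      (𝓝 (binf + b - A *ᵥ uIter binf dinf)) := by
    simp only [hb]
    exact (hbl.add tendsto_const_nhds).sub hAu
  have hd2 : Tendsto (fun k => dhat (k + 1)) atTop
      (𝓝 (dinf + d - P *ᵥ uIter binf dinf)) := by
    simp only [hd]
    exact (hdl.add tendsto_const_nhds).sub hPu
  have e1 := tendsto_nhds_unique hb1 hb2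
  have e2 := tendsto_nhds_unique hd1 hd2
  constructor
  · exact (add_left_cancel (sub_eq_iff_eq_add.mp e1.symm)).symm
  · exact (add_left_cancel (sub_eq_iff_eq_add.mp e2.symm)).symm
end

section
/- With A = [A₁ A₂] invertible and b ∈ ℂⁿ, let u = A⁻¹ b with blocks u₁, u₂, and let ũ₁ be an approximation of u₁. Define ũ₂ = (A₂*A₂)⁻¹ A₂*(b − A₁ ũ₁). Then ‖ũ₂ − u₂‖ ≤ ‖(A₂*A₂)⁻¹ A₂* A₁‖_op · ‖ũ₁ − u₁‖, so the error in the localized wavefield is controlled linearly by the error in the exterior wavefield. -/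
open Matrix

lemma sum_split_subtype {n : ℕ} (S : Finset (Fin n)) (f : Fin n → ℂ) :
    ∑ j, f j = (∑ j : {i : Fin n // i ∈ S}, f j.val) +
      ∑ j : {i : Fin n // i ∉ S}, f j.val := by
  rw [← Finset.sum_subtype S (fun j => Iff.rfl) f,
    ← Finset.sum_subtype Sᶜ (fun j => Finset.mem_compl) f,
    ← Finset.sum_add_sum_compl S f]

/-- Error propagation of the localized wavefield update: with `u = A⁻¹b` and
`ut₂ = (A₂*A₂)⁻¹A₂*(b − A₁ut₁)`, the error satisfies
`‖ut₂ − u₂‖ ≤ ‖(A₂*A₂)⁻¹A₂*A₁‖_op · ‖ut₁ − u₁‖`. -/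
theorem localized_error_bound {n : ℕ} (A : Matrix (Fin n) (Fin n) ℂ)
    (hA : IsUnit A.det) (S : Finset (Fin n)) (b : Fin n → ℂ)
    (ut₁ : {i : Fin n // i ∈ S} → ℂ) :
    let A₁ : Matrix (Fin n) {i : Fin n // i ∈ S} ℂ := Matrix.of fun i j => A i j.val
    let A₂ : Matrix (Fin n) {i : Fin n // i ∉ S} ℂ := Matrix.of fun i j => A i j.val
    let u : Fin n → ℂ := A⁻¹ *ᵥ b
    let u₁ : {i : Fin n // i ∈ S} → ℂ := fun j => u j.val
    let u₂ : {i : Fin n // i ∉ S} → ℂ := fun j => u j.val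
    let ut₂ : {i : Fin n // i ∉ S} → ℂ := (A₂ᴴ * A₂)⁻¹ *ᵥ (A₂ᴴ *ᵥ (b - A₁ *ᵥ ut₁))
    let B : Matrix {i : Fin n // i ∉ S} {i : Fin n // i ∈ S} ℂ := (A₂ᴴ * A₂)⁻¹ * A₂ᴴ * A₁
    Real.sqrt (∑ i, ‖(ut₂ - u₂) i‖^2) ≤
      ‖LinearMap.toContinuousLinearMap (Matrix.toEuclideanLin B)‖ *
        Real.sqrt (∑ i, ‖(ut₁ - u₁) i‖^2) := by
  intro A₁ A₂ u u₁ u₂ ut₂ B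
  -- A₂ has injective mulVec
  have hA₂inj : ∀ v : {i : Fin n // i ∉ S} → ℂ, A₂ *ᵥ v = 0 → v = 0 := by
    intro v hv
    set w : Fin n → ℂ := fun i => if h : i ∈ S then 0 else v ⟨i, h⟩ with hw
    have hAw : A *ᵥ w = 0 := by
      funext i
      have heq : (A *ᵥ w) i = (A₂ *ᵥ v) i := by
        simp only [mulVec, dotProduct]
        rw [sum_split_subtype S (fun j => A i j * w j)]
        have h1 : ∀ x : {i : Fin n // i ∈ S}, A i x.val * w x.val = 0 := fun x => by
          simp [hw, x.prop]
        have h2 : ∀ x : {i : Fin n // i ∉ S}, A i x.val * w x.val = A₂ i x * v x :=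
          fun x => by
            show A i x.val * (if h : x.val ∈ S then 0 else v ⟨x.val, h⟩) = _
            rw [dif_neg x.prop]
            rfl
        simp [h1, h2]
      rw [heq, hv]
    have hw0 : w = 0 :=
      Matrix.mulVec_injective_iff_isUnit.mpr
        ((Matrix.isUnit_iff_isUnit_det A).mpr hA) (a₁ := w) (a₂ := 0) (by simpa using hAw)
    funext j
    have := congrFun hw0 j.val
    simpa [hw, j.prop] using this
  -- Gram matrix is a unit
  have hG : IsUnit (A₂ᴴ * A₂) := by
    rw [← Matrix.mulVec_injective_iff_isUnit]
    intro v w hvw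
    have hz : (A₂ᴴ * A₂) *ᵥ (v - w) = 0 := by
      rw [Matrix.mulVec_sub, hvw, sub_self]
    have h0 : star (v - w) ⬝ᵥ ((A₂ᴴ * A₂) *ᵥ (v - w)) = 0 := by rw [hz]; simp
    rw [← Matrix.mulVec_mulVec, Matrix.dotProduct_mulVec, ← Matrix.star_mulVec] at h0
    have hAvw : A₂ *ᵥ (v - w) = 0 := by
      open scoped ComplexOrder in
      exact (dotProduct_star_self_eq_zero (v := A₂ *ᵥ (v - w))).mp h0
    have := hA₂inj _ hAvw
    exact sub_eq_zero.mp this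
  have hGinv : (A₂ᴴ * A₂)⁻¹ * (A₂ᴴ * A₂) = 1 :=
    Matrix.nonsing_inv_mul _ ((Matrix.isUnit_iff_isUnit_det _).mp hG)
  -- b = A₁ *ᵥ u₁ + A₂ *ᵥ u₂
  have hb : b = A₁ *ᵥ u₁ + A₂ *ᵥ u₂ := by
    have hAu : A *ᵥ u = b := by
      show A *ᵥ (A⁻¹ *ᵥ b) = b
      rw [Matrix.mulVec_mulVec, Matrix.mul_nonsing_inv A hA, Matrix.one_mulVec]
    funext i
    rw [← hAu]
    simp only [Pi.add_apply, mulVec, dotProduct]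
    rw [sum_split_subtype S (fun j => A i j * u j)]
    rfl
  -- key identity
  have key : ut₂ - u₂ = B *ᵥ (u₁ - ut₁) := by
    have h1 : b - A₁ *ᵥ ut₁ = A₁ *ᵥ (u₁ - ut₁) + A₂ *ᵥ u₂ := by
      rw [hb, Matrix.mulVec_sub]; abel
    show (A₂ᴴ * A₂)⁻¹ *ᵥ (A₂ᴴ *ᵥ (b - A₁ *ᵥ ut₁)) - u₂ = B *ᵥ (u₁ - ut₁)
    rw [h1, Matrix.mulVec_add]
    simp only [Matrix.mulVec_mulVec, Matrix.mulVec_add]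
    rw [hGinv, Matrix.one_mulVec, ← Matrix.mul_assoc]
    abel
  have hxnorm : ∀ i, ‖(u₁ - ut₁) i‖ = ‖(ut₁ - u₁) i‖ := fun i => by
    rw [Pi.sub_apply, Pi.sub_apply, ← neg_sub, norm_neg]
  set x : EuclideanSpace ℂ {i : Fin n // i ∈ S} := (WithLp.equiv 2 _).symm (u₁ - ut₁) with hxdef
  have hx : ‖x‖ = Real.sqrt (∑ i, ‖(ut₁ - u₁) i‖^2) := by
    rw [EuclideanSpace.norm_eq]
    congr 1
    exact Finset.sum_congr rfl fun i _ => by rw [show ‖x i‖ = ‖(u₁ - ut₁) i‖ from rfl, hxnorm]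
  have hBx : ‖LinearMap.toContinuousLinearMap (Matrix.toEuclideanLin B) x‖ =
      Real.sqrt (∑ i, ‖(ut₂ - u₂) i‖^2) := by
    rw [LinearMap.coe_toContinuousLinearMap', Matrix.toEuclideanLin_apply,
      EuclideanSpace.norm_eq]
    congr 1
    refine Finset.sum_congr rfl fun i _ => ?_
    congr 1
    show ‖(B *ᵥ (u₁ - ut₁)) i‖ = ‖(ut₂ - u₂) i‖
    rw [key]
  calc Real.sqrt (∑ i, ‖(ut₂ - u₂) i‖^2)
      = ‖LinearMap.toContinuousLinearMap (Matrix.toEuclideanLin B) x‖ := hBx.symm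
    _ ≤ ‖LinearMap.toContinuousLinearMap (Matrix.toEuclideanLin B)‖ * ‖x‖ :=
        ContinuousLinearMap.le_opNorm _ _
    _ = _ := by rw [hx]
end
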